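/- Let S_{3,1,1} be the spider on 6 vertices with one leg of three edges and two legs of one edge each. Then for every n ≥ 7, ex_c(n, S_{3,1,1}) = ⌊3(n−1)/2⌋, and ex_c(6, S_{3,1,1}) = 9. -/

import Mathlib

set_option maxRecDepth 8000

open SimpleGraph

/-- `G` contains a copy of `F`, i.e. a subgraph isomorphic to `F`
(given by an injective graph homomorphism). -/
def ContainsCopy {α β : Type*} (F : SimpleGraph α) (G : SimpleGraph β) : Prop :=
  ∃ f : α ↪ β, ∀ ⦃a b : α⦄, F.Adj a b → G.Adj (f a) (f b)

/-- The connected Turán number `ex_c(n, F)`: the maximum number of edges of a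
connected `F`-free simple graph on `n` vertices. -/
noncomputable def exConn {α : Type*} (n : ℕ) (F : SimpleGraph α) : ℕ :=
  sSup {m | ∃ G : SimpleGraph (Fin n), G.Connected ∧ ¬ ContainsCopy F G ∧ m = G.edgeSet.ncard}

/-- The spider `S_{3,1,1}` on 6 vertices: center `0`, one leg `0-1-2-3` of three edges,
and two legs `0-4`, `0-5` of one edge each. -/
def spider311 : SimpleGraph (Fin 6) :=
  SimpleGraph.fromRel (fun i j =>
    (i = 0 ∧ j = 1) ∨ (i = 1 ∧ j = 2) ∨ (i = 2 ∧ j = 3) ∨ (i = 0 ∧ j = 4) ∨ (i = 0 ∧ j = 5))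

open Finset
lemma containsCopy_mk {β : Type*} (G : SimpleGraph β) {v a b c d e : β}
    (hva : G.Adj v a) (hab : G.Adj a b) (hbc : G.Adj b c)
    (hvd : G.Adj v d) (hve : G.Adj v e)
    (h1 : v ≠ b) (h2 : v ≠ c) (h3 : a ≠ c) (h4 : a ≠ d) (h5 : a ≠ e)
    (h6 : b ≠ d) (h7 : b ≠ e) (h8 : c ≠ d) (h9 : c ≠ e) (h10 : d ≠ e) :
    ContainsCopy spider311 G := by
  have h0 : v ≠ a := G.ne_of_adj hva
  have h11 : a ≠ b := G.ne_of_adj hab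
  have h12 : b ≠ c := G.ne_of_adj hbc
  have h13 : v ≠ d := G.ne_of_adj hvd
  have h14 : v ≠ e := G.ne_of_adj hve
  refine ⟨⟨![v,a,b,c,d,e], ?_⟩, ?_⟩
  · intro i j hij
    fin_cases i <;> fin_cases j <;> first
      | rfl
      | (exfalso; simp only [Matrix.cons_val_zero, Matrix.cons_val_one, Matrix.head_cons,
          Matrix.cons_val_succ] at hij; tauto)
  · intro i j hij
    fin_cases i <;> fin_cases j <;>
      simp only [spider311, SimpleGraph.fromRel_adj] at hij <;>
      simp only [Matrix.cons_val_zero, Matrix.cons_val_one, Matrix.head_cons,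
          Matrix.cons_val_succ] <;>
      first
        | exact hva | exact hab | exact hbc | exact hvd | exact hve
        | exact hva.symm | exact hab.symm | exact hbc.symm | exact hvd.symm | exact hve.symm
        | (exfalso; revert hij; decide)

lemma containsCopy_elim {β : Type*} {G : SimpleGraph β} (h : ContainsCopy spider311 G) :
    ∃ v a b c d e : β, G.Adj v a ∧ G.Adj a b ∧ G.Adj b c ∧ G.Adj v d ∧ G.Adj v e ∧
      v ≠ b ∧ v ≠ c ∧ a ≠ c ∧ a ≠ d ∧ a ≠ e ∧ b ≠ d ∧ b ≠ e ∧ c ≠ d ∧ c ≠ e ∧ d ≠ e := by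
  obtain ⟨f, hf⟩ := h
  refine ⟨f 0, f 1, f 2, f 3, f 4, f 5,
    hf (by simp [spider311]), hf (by simp [spider311]), hf (by simp [spider311]),
    hf (by simp [spider311]), hf (by simp [spider311]),
    ?_, ?_, ?_, ?_, ?_, ?_, ?_, ?_, ?_, ?_⟩ <;>
    exact fun hh => by simpa using f.injective hh

/-- spider from a path of length 3 out of `v` plus two spare neighbors of `v`. -/
lemma no_path3 {n : ℕ} {G : SimpleGraph (Fin n)} [DecidableRel G.Adj]
    (hf : ¬ ContainsCopy spider311 G) {v x y z : Fin n}
    (hvx : G.Adj v x) (hxy : G.Adj x y) (hyz : G.Adj y z)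
    (hyv : y ≠ v) (hzv : z ≠ v) (hzx : z ≠ x)
    (hcard : 2 ≤ ((G.neighborFinset v) \ {x, y, z}).card) : False := by
  obtain ⟨p, hp, q, hq, hpq⟩ := Finset.one_lt_card.mp hcard
  simp only [Finset.mem_sdiff, Finset.mem_insert, Finset.mem_singleton,
    SimpleGraph.mem_neighborFinset, not_or] at hp hq
  exact hf (containsCopy_mk G hvx hxy hyz hp.1 hq.1
    hyv.symm hzv.symm hzx.symm (fun h => hp.2.1 h.symm) (fun h => hq.2.1 h.symm)
    (fun h => hp.2.2.1 h.symm) (fun h => hq.2.2.1 h.symm)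
    (fun h => hp.2.2.2 h.symm) (fun h => hq.2.2.2 h.symm) hpq)

/-- Every vertex is within distance 2 of `v`, given no escaping path of length 3. -/
lemma ball2_of_noP3 {n : ℕ} {G : SimpleGraph (Fin n)} [DecidableRel G.Adj]
    (hc : G.Connected) (v : Fin n)
    (H : ∀ x y z : Fin n, G.Adj v x → G.Adj x y → G.Adj y z → ¬ G.Adj v y → y ≠ v →
      ¬ G.Adj v z → z ≠ v → z ≠ x → False) :
    ∀ u, u = v ∨ G.Adj v u ∨ ∃ x, G.Adj v x ∧ G.Adj x u := by
  set S : Set (Fin n) := {u | u = v ∨ G.Adj v u ∨ ∃ x, G.Adj v x ∧ G.Adj x u} with hSdef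
  have hclosed : ∀ a ∈ S, ∀ b, G.Adj a b → b ∈ S := by
    intro a ha b hab
    by_cases hbv : b = v
    · exact Or.inl hbv
    by_cases hvb : G.Adj v b
    · exact Or.inr (Or.inl hvb)
    by_cases hva : G.Adj v a
    · exact Or.inr (Or.inr ⟨a, hva, hab⟩)
    rcases ha with rfl | h | ⟨x, hvx, hxa⟩
    · exact absurd hab hvb
    · exact absurd h hva
    · have hav : a ≠ v := by rintro rfl; exact hvb hab
      have hbx : b ≠ x := by rintro rfl; exact hvb hvx
      exact absurd (H x a b hvx hxa hab hva hav hvb hbv hbx) not_false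
  have key : ∀ {p u : Fin n}, p ∈ S → G.Walk p u → u ∈ S := by
    intro p u hp w
    induction w with
    | nil => exact hp
    | cons h q ih => exact ih (hclosed _ hp _ h)
  intro u
  exact key (Or.inl rfl) (hc.preconnected v u).some

/-- Outside the closed neighborhood of `v`, all neighbors lie in `N(v)`. -/
lemma nbrs_subset_of_noP3 {n : ℕ} {G : SimpleGraph (Fin n)} [DecidableRel G.Adj]
    (hc : G.Connected) (v : Fin n)
    (H : ∀ x y z : Fin n, G.Adj v x → G.Adj x y → G.Adj y z → ¬ G.Adj v y → y ≠ v →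
      ¬ G.Adj v z → z ≠ v → z ≠ x → False)
    (y : Fin n) (hyv : y ≠ v) (hvy : ¬ G.Adj v y) :
    (∃ x, G.Adj v x ∧ G.Adj x y) ∧ ∀ w, G.Adj y w → G.Adj v w := by
  rcases ball2_of_noP3 hc v H y with rfl | h | ⟨x, hvx, hxy⟩
  · exact absurd rfl hyv
  · exact absurd h hvy
  refine ⟨⟨x, hvx, hxy⟩, fun w hyw => ?_⟩
  by_contra hvw
  have hwv : w ≠ v := by rintro rfl; exact hvy hyw.symm
  by_cases hwx : w = x
  · exact hvw (hwx ▸ hvx)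
  exact H x y w hvx hxy hyw hvy hyv hvw hwv hwx

/-- Double counting edges between two finsets. -/
lemma double_count {n : ℕ} (G : SimpleGraph (Fin n)) [DecidableRel G.Adj]
    (A B : Finset (Fin n)) :
    ∑ x ∈ A, (B.filter (G.Adj x)).card = ∑ y ∈ B, (A.filter (G.Adj y)).card := by
  simp only [Finset.card_filter]
  rw [Finset.sum_comm]
  congr 1; ext y; congr 1; ext x
  simp [G.adj_comm]
/-- Main upper bound. -/
lemma free_upper {n : ℕ} (hn : 6 ≤ n) (G : SimpleGraph (Fin n)) [DecidableRel G.Adj]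
    (hc : G.Connected) (hf : ¬ ContainsCopy spider311 G) :
    2 * G.edgeFinset.card ≤ if n = 6 then 18 else 3 * (n - 1) := by
  have hnpos : 0 < n := by omega
  have handshake : ∑ u, G.degree u = 2 * G.edgeFinset.card := G.sum_degrees_eq_twice_card_edges
  by_contra hbad
  push_neg at hbad
  -- if all degrees are ≤ 2 we are immediately done
  by_cases htiny : ∀ u : Fin n, G.degree u ≤ 2
  · have : ∑ u, G.degree u ≤ 2 * n := by
      calc ∑ u, G.degree u ≤ ∑ _u : Fin n, 2 := Finset.sum_le_sum fun u _ => htiny u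
        _ = 2 * n := by simp [Finset.sum_const, mul_comm]
    split_ifs at hbad with h6 <;> omega
  push_neg at htiny
  obtain ⟨u0, hu0⟩ := htiny
  -- a vertex of maximum degree; it has degree ≥ 3
  obtain ⟨v, hv⟩ : ∃ v : Fin n, ∀ u : Fin n, G.degree u ≤ G.degree v := by
    obtain ⟨v, -, hv⟩ := Finset.exists_max_image Finset.univ (fun u => G.degree u)
      ⟨⟨0, hnpos⟩, Finset.mem_univ _⟩
    exact ⟨v, fun u => hv u (Finset.mem_univ u)⟩
  have hge3 : 3 ≤ G.degree v := le_trans (by omega) (hv u0)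
  set N : Finset (Fin n) := G.neighborFinset v with hN
  set D : Finset (Fin n) := Finset.univ \ insert v N with hD
  have hvN : v ∉ N := by simp [hN]
  have hdN : N.card = G.degree v := rfl
  have hcardT : n = 1 + N.card + D.card := by
    have hsub : insert v N ⊆ Finset.univ := Finset.subset_univ _
    have hcs := Finset.card_sdiff_of_subset hsub
    rw [← hD] at hcs
    have h1 : (insert v N).card ≤ (Finset.univ : Finset (Fin n)).card := Finset.card_le_card hsub
    have h2 : (insert v N).card = N.card + 1 := Finset.card_insert_of_notMem hvN
    have h3 : (Finset.univ : Finset (Fin n)).card = n := by simp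
    omega
  have hsplit : ∑ u, G.degree u =
      (G.degree v + ∑ x ∈ N, G.degree x) + ∑ y ∈ D, G.degree y := by
    rw [← Finset.sum_sdiff (Finset.subset_univ (insert v N)), ← hD,
      Finset.sum_insert hvN, add_comm]
  have hdeg_filter : ∀ x : Fin n, G.degree x = (Finset.univ.filter (G.Adj x)).card := by
    intro x
    rw [← SimpleGraph.card_neighborFinset_eq_degree]
    congr 1; ext w; simp
  have hmemD : ∀ {y : Fin n}, y ∈ D ↔ y ≠ v ∧ ¬ G.Adj v y := by
    intro y; simp [hD, hN, not_or]
  have hmemN : ∀ {x : Fin n}, x ∈ N ↔ G.Adj v x := by intro x; simp [hN]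
  have hdeg_dec : ∀ x : Fin n,
      G.degree x = ((insert v N).filter (G.Adj x)).card + (D.filter (G.Adj x)).card := by
    intro x
    rw [hdeg_filter x, ← Finset.card_union_of_disjoint, ← Finset.filter_union]
    · congr 2
      rw [Finset.union_sdiff_of_subset (Finset.subset_univ _)]
    · exact Finset.disjoint_filter_filter (Finset.disjoint_sdiff)
  rcases Nat.lt_or_ge (G.degree v) 4 with hd3 | hd4
  -- ================= case Δ = 3 =================
  · have hdeg3 : G.degree v = 3 := by omega
    have hall3 : ∀ u, G.degree u ≤ 3 := fun u => by have := hv u; omega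
    have hsigub : ∑ u, G.degree u ≤ 3 * n := by
      calc ∑ u, G.degree u ≤ ∑ _u : Fin n, 3 := Finset.sum_le_sum fun u _ => hall3 u
        _ = 3 * n := by simp [Finset.sum_const, mul_comm]
    by_cases h6 : n = 6
    · rw [if_pos h6] at hbad; omega
    rw [if_neg h6] at hbad
    have hn7 : 7 ≤ n := by omega
    have hH' : ∀ x y z : Fin n, G.Adj v x → G.Adj x y → G.Adj y z → ¬ G.Adj v y → y ≠ v →
        ¬ G.Adj v z → z ≠ v → z ≠ x → False := by
      intro x y z hvx hxy hyz hvy hyv hvz hzv hzx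
      refine no_path3 hf hvx hxy hyz hyv hzv hzx ?_
      show 2 ≤ (N \ {x, y, z}).card
      have hsub : N.erase x ⊆ N \ {x, y, z} := by
        intro w hw
        obtain ⟨hwx, hwN⟩ := Finset.mem_erase.mp hw
        refine Finset.mem_sdiff.mpr ⟨hwN, ?_⟩
        simp only [Finset.mem_insert, Finset.mem_singleton, not_or]
        refine ⟨hwx, ?_, ?_⟩
        · rintro rfl; exact hvy (hmemN.mp hwN)
        · rintro rfl; exact hvz (hmemN.mp hwN)
      have h1 := Finset.card_le_card hsub
      have h2 : (N.erase x).card = 2 := by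
        rw [Finset.card_erase_of_mem (hmemN.mpr hvx), hdN, hdeg3]
      omega
    have hDnb : ∀ y ∈ D, ∀ w, G.Adj y w → w ∈ N := by
      intro y hy w hyw
      obtain ⟨hyv, hvy⟩ := hmemD.mp hy
      exact hmemN.mpr ((nbrs_subset_of_noP3 hc v hH' y hyv hvy).2 w hyw)
    have hDdegN : ∀ y ∈ D, G.degree y = (N.filter (G.Adj y)).card := by
      intro y hy
      rw [hdeg_filter y]
      congr 1
      ext w
      simp only [Finset.mem_filter, Finset.mem_univ, true_and]
      exact ⟨fun h => ⟨hDnb y hy w h, h⟩, fun h => h.2⟩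
    have hND : ∀ x ∈ N, (D.filter (G.Adj x)).card ≤ 2 := by
      intro x hx
      have hsub : D.filter (G.Adj x) ⊆ (G.neighborFinset x).erase v := by
        intro w hw
        obtain ⟨hwD, hxw⟩ := Finset.mem_filter.mp hw
        exact Finset.mem_erase.mpr ⟨(hmemD.mp hwD).1, by simpa using hxw⟩
      have hvmem : v ∈ G.neighborFinset x := by
        simpa using (hmemN.mp hx).symm
      have h1 := Finset.card_le_card hsub
      rw [Finset.card_erase_of_mem hvmem, SimpleGraph.card_neighborFinset_eq_degree] at h1
      have h2 := hall3 x
      omega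
    have hsumD_ub : ∑ y ∈ D, G.degree y ≤ 6 := by
      rw [Finset.sum_congr rfl hDdegN, ← double_count G N D]
      calc ∑ x ∈ N, (D.filter (G.Adj x)).card ≤ ∑ _x ∈ N, 2 := Finset.sum_le_sum hND
        _ = 6 := by rw [Finset.sum_const, hdN, hdeg3]; rfl
    have hsumN : ∑ x ∈ N, G.degree x ≤ 9 := by
      calc ∑ x ∈ N, G.degree x ≤ ∑ _x ∈ N, 3 := Finset.sum_le_sum fun x _ => hall3 x
        _ = 9 := by rw [Finset.sum_const, hdN, hdeg3]; rfl
    have hdefD : ∑ y ∈ D, (3 - G.degree y) + ∑ u, G.degree u ≤ 3 * n + 2 := by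
      have h1 : ∑ u, (3 - G.degree u) + ∑ u, G.degree u = 3 * n := by
        rw [← Finset.sum_add_distrib]
        calc ∑ u, (3 - G.degree u + G.degree u) = ∑ _u : Fin n, 3 :=
              Finset.sum_congr rfl fun u _ => by have := hall3 u; omega
          _ = 3 * n := by simp [Finset.sum_const, mul_comm]
      have h2 : ∑ y ∈ D, (3 - G.degree y) ≤ ∑ u, (3 - G.degree u) :=
        Finset.sum_le_sum_of_subset (Finset.subset_univ D)
      omega
    have hDlow : ∑ y ∈ D, (3 - G.degree y) + ∑ y ∈ D, G.degree y = 3 * D.card := by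
      rw [← Finset.sum_add_distrib]
      calc ∑ y ∈ D, (3 - G.degree y + G.degree y) = ∑ _y ∈ D, 3 :=
            Finset.sum_congr rfl fun y _ => by have := hall3 y; omega
        _ = 3 * D.card := by rw [Finset.sum_const]; ring
    omega
  · rcases Nat.lt_or_ge (G.degree v) 5 with hd4' | hd5
    -- ================= case Δ = 4 =================
    · have hdeg4 : G.degree v = 4 := by omega
      have hH : ∀ x y z : Fin n, G.Adj v x → G.Adj x y → G.Adj y z → ¬ G.Adj v y → y ≠ v →
          z ≠ v → z ≠ x → False := by
        intro x y z hvx hxy hyz hvy hyv hzv hzx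
        refine no_path3 hf hvx hxy hyz hyv hzv hzx ?_
        show 2 ≤ (N \ {x, y, z}).card
        have hsub : N \ {x, z} ⊆ N \ {x, y, z} := by
          intro w hw
          obtain ⟨hwN, hw2⟩ := Finset.mem_sdiff.mp hw
          simp only [Finset.mem_insert, Finset.mem_singleton, not_or] at hw2
          refine Finset.mem_sdiff.mpr ⟨hwN, ?_⟩
          simp only [Finset.mem_insert, Finset.mem_singleton, not_or]
          refine ⟨hw2.1, ?_, hw2.2⟩
          rintro rfl; exact hvy (hmemN.mp hwN)
        have h1 := Finset.card_le_card hsub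
        have h2 := Finset.le_card_sdiff ({x, z} : Finset (Fin n)) N
        have h3 : ({x, z} : Finset (Fin n)).card ≤ 2 := Finset.card_insert_le _ _
        omega
      have hH' : ∀ x y z : Fin n, G.Adj v x → G.Adj x y → G.Adj y z → ¬ G.Adj v y → y ≠ v →
          ¬ G.Adj v z → z ≠ v → z ≠ x → False :=
        fun x y z h1 h2 h3 hy hy' _ hz hzx => hH x y z h1 h2 h3 hy hy' hz hzx
      have hpend : ∀ y ∈ D, ∃ x, G.Adj v x ∧ G.neighborFinset y = {x} := by
        intro y hy
        obtain ⟨hyv, hvy⟩ := hmemD.mp hy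
        obtain ⟨⟨x, hvx, hxy⟩, hall⟩ := nbrs_subset_of_noP3 hc v hH' y hyv hvy
        refine ⟨x, hvx, ?_⟩
        ext w
        simp only [SimpleGraph.mem_neighborFinset, Finset.mem_singleton]
        constructor
        · intro hyw
          by_contra hwx
          have hwv : w ≠ v := by rintro rfl; exact hvy hyw.symm
          exact hH x y w hvx hxy hyw hvy hyv hwv hwx
        · rintro rfl; exact hxy.symm
      have hDdeg : ∀ y ∈ D, G.degree y = 1 := by
        intro y hy
        obtain ⟨x, -, hnb⟩ := hpend y hy
        rw [← SimpleGraph.card_neighborFinset_eq_degree, hnb, Finset.card_singleton]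
      have hD1 : ∀ y ∈ D, (N.filter (G.Adj y)).card = 1 := by
        intro y hy
        obtain ⟨x, hvx, hnb⟩ := hpend y hy
        have hfx : N.filter (G.Adj y) = {x} := by
          ext w
          constructor
          · intro hw
            obtain ⟨hwN, hyw⟩ := Finset.mem_filter.mp hw
            have hmem : w ∈ G.neighborFinset y := (SimpleGraph.mem_neighborFinset _ _ _).mpr hyw
            rw [hnb] at hmem
            exact hmem
          · intro hw
            rw [Finset.mem_singleton] at hw
            subst hw
            have hmem : w ∈ G.neighborFinset y := by rw [hnb]; exact Finset.mem_singleton_self w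
            exact Finset.mem_filter.mpr ⟨hmemN.mpr hvx, by simpa using hmem⟩
        rw [hfx, Finset.card_singleton]
      have hdc : ∑ x ∈ N, (D.filter (G.Adj x)).card = D.card := by
        rw [double_count G N D]
        rw [Finset.sum_congr rfl hD1, Finset.sum_const, smul_eq_mul, mul_one]
      have hDN : ∀ {x y : Fin n}, x ∈ N → y ∈ D → x ≠ y := by
        intro x y hx hy
        rintro rfl
        exact (hmemD.mp hy).2 (hmemN.mp hx)
      have hF1 : ∀ x ∈ N, ∀ w ∈ N, ∀ p ∈ D, G.Adj x w → G.Adj x p → False := by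
        intro x hx w hw p hp hxw hxp
        obtain ⟨hpv, hvp⟩ := hmemD.mp hp
        refine no_path3 hf (hmemN.mp hw) hxw.symm hxp
          ((G.ne_of_adj (hmemN.mp hx)).symm) hpv (hDN hw hp).symm ?_
        show 2 ≤ (N \ {w, x, p}).card
        have hsub : N \ {w, x} ⊆ N \ {w, x, p} := by
          intro u hu
          obtain ⟨huN, hu2⟩ := Finset.mem_sdiff.mp hu
          simp only [Finset.mem_insert, Finset.mem_singleton, not_or] at hu2
          refine Finset.mem_sdiff.mpr ⟨huN, ?_⟩
          simp only [Finset.mem_insert, Finset.mem_singleton, not_or]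
          exact ⟨hu2.1, hu2.2, hDN huN hp⟩
        have h1 := Finset.card_le_card hsub
        have h2 := Finset.le_card_sdiff ({w, x} : Finset (Fin n)) N
        have h3 : ({w, x} : Finset (Fin n)).card ≤ 2 := Finset.card_insert_le _ _
        omega
      have hTzero : ∀ x ∈ N, ∀ p ∈ D, G.Adj x p → N.filter (G.Adj x) = ∅ := by
        intro x hx p hp hxp
        rw [Finset.filter_eq_empty_iff]
        intro w hw hxw
        exact hF1 x hx w hw p hp hxw hxp
      have hDcard : D.card = n - 5 := by omega
      have hDne : D.Nonempty := Finset.card_pos.mp (by omega)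
      obtain ⟨y1, hy1⟩ := hDne
      obtain ⟨b1, hvb1, hnb1⟩ := hpend y1 hy1
      have hb1N : b1 ∈ N := hmemN.mpr hvb1
      have hb1y1 : G.Adj b1 y1 := by
        have : b1 ∈ G.neighborFinset y1 := by rw [hnb1]; exact Finset.mem_singleton_self b1
        exact ((SimpleGraph.mem_neighborFinset _ _ _).mp this).symm
      have hNdeg : ∀ x ∈ N,
          G.degree x ≤ 1 + (N.filter (G.Adj x)).card + (D.filter (G.Adj x)).card := by
        intro x hx
        rw [hdeg_dec x]
        have h1 : ((insert v N).filter (G.Adj x)).card ≤ 1 + (N.filter (G.Adj x)).card := by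
          rw [Finset.filter_insert]
          split
          · exact le_trans (Finset.card_insert_le _ _) (by omega)
          · omega
        omega
      by_cases h6 : n = 6
      · -- n = 6 : single pendant, T ≤ 6
        have hT : ∀ x ∈ N, x ≠ b1 → (N.filter (G.Adj x)).card ≤ 2 := by
          intro x hx hxb
          have hsub : N.filter (G.Adj x) ⊆ (N.erase x).erase b1 := by
            intro w hw
            obtain ⟨hwN, hxw⟩ := Finset.mem_filter.mp hw
            refine Finset.mem_erase.mpr ⟨?_, Finset.mem_erase.mpr ⟨(G.ne_of_adj hxw).symm, hwN⟩⟩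
            intro hwb
            apply hF1 b1 hb1N x hx y1 hy1 ?_ hb1y1
            rw [← hwb]
            exact hxw.symm
          have h1 := Finset.card_le_card hsub
          have h2 : ((N.erase x).erase b1).card = 2 := by
            rw [Finset.card_erase_of_mem (Finset.mem_erase.mpr ⟨fun h => hxb h.symm, hb1N⟩),
              Finset.card_erase_of_mem hx, hdN, hdeg4]
          omega
        have hTb : (N.filter (G.Adj b1)).card = 0 := by
          rw [hTzero b1 hb1N y1 hy1 hb1y1]; rfl
        have hsumT : ∑ x ∈ N, (N.filter (G.Adj x)).card ≤ 6 := by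
          rw [← Finset.add_sum_erase _ _ hb1N, hTb]
          have h1 : ∑ x ∈ N.erase b1, (N.filter (G.Adj x)).card ≤ ∑ _x ∈ N.erase b1, 2 :=
            Finset.sum_le_sum fun x hx =>
              hT x (Finset.mem_of_mem_erase hx) (Finset.ne_of_mem_erase hx)
          have h2 : (N.erase b1).card = 3 := by
            rw [Finset.card_erase_of_mem hb1N, hdN, hdeg4]
          rw [Finset.sum_const, h2, smul_eq_mul] at h1
          omega
        have hsumN : ∑ x ∈ N, G.degree x ≤ N.card + 6 + D.card := by
          calc ∑ x ∈ N, G.degree x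
              ≤ ∑ x ∈ N, (1 + (N.filter (G.Adj x)).card + (D.filter (G.Adj x)).card) :=
                Finset.sum_le_sum hNdeg
            _ = N.card + ∑ x ∈ N, (N.filter (G.Adj x)).card
                + ∑ x ∈ N, (D.filter (G.Adj x)).card := by
                rw [Finset.sum_add_distrib, Finset.sum_add_distrib, Finset.sum_const,
                  smul_eq_mul, mul_one]
            _ ≤ N.card + 6 + D.card := by rw [hdc]; omega
        have hsumD : ∑ y ∈ D, G.degree y = D.card := by
          rw [Finset.sum_congr rfl hDdeg, Finset.sum_const, smul_eq_mul, mul_one]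
        rw [if_pos h6] at hbad
        omega
      · rw [if_neg h6] at hbad
        have hn7 : 7 ≤ n := by omega
        obtain ⟨y2, hy2, hy21⟩ : ∃ y2 ∈ D, y2 ≠ y1 := by
          have h2 : 1 < D.card := by omega
          obtain ⟨a, ha, b, hb, hab⟩ := Finset.one_lt_card.mp h2
          rcases eq_or_ne a y1 with rfl | h
          · exact ⟨b, hb, fun h => hab h.symm⟩
          · exact ⟨a, ha, h⟩
        obtain ⟨b2, hvb2, hnb2⟩ := hpend y2 hy2
        have hb2N : b2 ∈ N := hmemN.mpr hvb2
        have hb2y2 : G.Adj b2 y2 := by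
          have : b2 ∈ G.neighborFinset y2 := by rw [hnb2]; exact Finset.mem_singleton_self b2
          exact ((SimpleGraph.mem_neighborFinset _ _ _).mp this).symm
        have hy1v : y1 ≠ v := (hmemD.mp hy1).1
        have hy2v : y2 ≠ v := (hmemD.mp hy2).1
        have hsumT : ∑ x ∈ N, (N.filter (G.Adj x)).card ≤ 2 := by
          by_cases hbb : b2 = b1
          · -- all pendants on b1 : T = 0
            subst hbb
            have hstar : ∀ x ∈ N, x ≠ b2 → ∀ z, G.Adj x z → z = v ∨ z = b2 := by
              intro x hx hxb z hxz
              by_contra hcon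
              push_neg at hcon
              obtain ⟨hzv, hzb⟩ := hcon
              refine hf (containsCopy_mk G hvb2.symm (hmemN.mp hx) hxz
                hb1y1 hb2y2 (fun h => hxb h.symm) (fun h => hzb h.symm)
                (fun h => hzv h.symm) hy1v.symm hy2v.symm
                (hDN hx hy1) (hDN hx hy2) ?_ ?_ hy21.symm)
              · rintro rfl
                have : x ∈ G.neighborFinset z := by simpa using hxz.symm
                rw [hnb1] at this
                exact hxb (Finset.mem_singleton.mp this)
              · rintro rfl
                have : x ∈ G.neighborFinset z := by simpa using hxz.symm
                rw [hnb2] at this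
                exact hxb (Finset.mem_singleton.mp this)
            have hT0 : ∀ x ∈ N, (N.filter (G.Adj x)).card = 0 := by
              intro x hx
              by_cases hxb : x = b2
              · subst hxb
                rw [hTzero x hx y1 hy1 hb1y1]; rfl
              · rw [Finset.card_eq_zero, Finset.filter_eq_empty_iff]
                intro w hw hxw
                rcases hstar x hx hxb w hxw with rfl | rfl
                · exact hvN hw
                · exact hF1 w hw x hx y1 hy1 hxw.symm hb1y1
            rw [Finset.sum_congr rfl hT0, Finset.sum_const, smul_eq_mul, mul_zero]
            omega
          · -- two distinct attachment points : T ≤ 2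
            have hTb1 : (N.filter (G.Adj b1)).card = 0 := by
              rw [hTzero b1 hb1N y1 hy1 hb1y1]; rfl
            have hTb2 : (N.filter (G.Adj b2)).card = 0 := by
              rw [hTzero b2 hb2N y2 hy2 hb2y2]; rfl
            have hT : ∀ x ∈ N, x ≠ b1 → x ≠ b2 → (N.filter (G.Adj x)).card ≤ 1 := by
              intro x hx hxb1 hxb2
              have hsub : N.filter (G.Adj x) ⊆ ((N.erase x).erase b1).erase b2 := by
                intro w hw
                obtain ⟨hwN, hxw⟩ := Finset.mem_filter.mp hw
                refine Finset.mem_erase.mpr ⟨?_, Finset.mem_erase.mpr ⟨?_,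
                  Finset.mem_erase.mpr ⟨(G.ne_of_adj hxw).symm, hwN⟩⟩⟩
                · intro hwb
                  apply hF1 b2 hb2N x hx y2 hy2 ?_ hb2y2
                  rw [← hwb]
                  exact hxw.symm
                · intro hwb
                  apply hF1 b1 hb1N x hx y1 hy1 ?_ hb1y1
                  rw [← hwb]
                  exact hxw.symm
              have h1 := Finset.card_le_card hsub
              have hb1m : b1 ∈ N.erase x := Finset.mem_erase.mpr ⟨fun h => hxb1 h.symm, hb1N⟩
              have hb2m : b2 ∈ (N.erase x).erase b1 :=
                Finset.mem_erase.mpr ⟨hbb, Finset.mem_erase.mpr ⟨fun h => hxb2 h.symm, hb2N⟩⟩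
              have h2 : (((N.erase x).erase b1).erase b2).card = 1 := by
                rw [Finset.card_erase_of_mem hb2m, Finset.card_erase_of_mem hb1m,
                  Finset.card_erase_of_mem hx, hdN, hdeg4]
              omega
            have hb2e : b2 ∈ N.erase b1 := Finset.mem_erase.mpr ⟨hbb, hb2N⟩
            rw [← Finset.add_sum_erase _ _ hb1N, hTb1, ← Finset.add_sum_erase _ _ hb2e, hTb2]
            have h1 : ∑ x ∈ (N.erase b1).erase b2, (N.filter (G.Adj x)).card
                ≤ ∑ _x ∈ (N.erase b1).erase b2, 1 :=
              Finset.sum_le_sum fun x hx => hT x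
                (Finset.mem_of_mem_erase (Finset.mem_of_mem_erase hx))
                (Finset.ne_of_mem_erase (Finset.mem_of_mem_erase hx))
                (Finset.ne_of_mem_erase hx)
            have h2 : ((N.erase b1).erase b2).card = 2 := by
              rw [Finset.card_erase_of_mem hb2e, Finset.card_erase_of_mem hb1N, hdN, hdeg4]
            rw [Finset.sum_const, h2, smul_eq_mul] at h1
            omega
        have hsumN : ∑ x ∈ N, G.degree x ≤ N.card + 2 + D.card := by
          calc ∑ x ∈ N, G.degree x
              ≤ ∑ x ∈ N, (1 + (N.filter (G.Adj x)).card + (D.filter (G.Adj x)).card) :=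
                Finset.sum_le_sum hNdeg
            _ = N.card + ∑ x ∈ N, (N.filter (G.Adj x)).card
                + ∑ x ∈ N, (D.filter (G.Adj x)).card := by
                rw [Finset.sum_add_distrib, Finset.sum_add_distrib, Finset.sum_const,
                  smul_eq_mul, mul_one]
            _ ≤ N.card + 2 + D.card := by rw [hdc]; omega
        have hsumD : ∑ y ∈ D, G.degree y = D.card := by
          rw [Finset.sum_congr rfl hDdeg, Finset.sum_const, smul_eq_mul, mul_one]
        omega

    -- ================= case Δ ≥ 5 =================
    · -- d ≥ 5
      have hH : ∀ x y z : Fin n, G.Adj v x → G.Adj x y → G.Adj y z → y ≠ v → z ≠ v → z ≠ x →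
          False := by
        intro x y z hvx hxy hyz hyv hzv hzx
        refine no_path3 hf hvx hxy hyz hyv hzv hzx ?_
        show 2 ≤ (N \ {x, y, z}).card
        have h1 : ({x, y, z} : Finset (Fin n)).card ≤ 3 := by
          refine le_trans (Finset.card_insert_le _ _) ?_
          have := Finset.card_insert_le y ({z} : Finset (Fin n))
          simp at this ⊢; omega
        have h2 := Finset.le_card_sdiff ({x, y, z} : Finset (Fin n)) N
        omega
      have hH' : ∀ x y z : Fin n, G.Adj v x → G.Adj x y → G.Adj y z → ¬ G.Adj v y → y ≠ v →
          ¬ G.Adj v z → z ≠ v → z ≠ x → False :=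
        fun x y z h1 h2 h3 _ hy _ hz hzx => hH x y z h1 h2 h3 hy hz hzx
      have hpend : ∀ y ∈ D, ∃ x, G.Adj v x ∧ G.neighborFinset y = {x} := by
        intro y hy
        obtain ⟨hyv, hvy⟩ := hmemD.mp hy
        obtain ⟨⟨x, hvx, hxy⟩, hall⟩ := nbrs_subset_of_noP3 hc v hH' y hyv hvy
        refine ⟨x, hvx, ?_⟩
        ext w
        simp only [SimpleGraph.mem_neighborFinset, Finset.mem_singleton]
        constructor
        · intro hyw
          by_contra hwx
          have hwv : w ≠ v := by rintro rfl; exact hvy hyw.symm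
          exact hH x y w hvx hxy hyw hyv hwv hwx
        · rintro rfl; exact hxy.symm
      have hDdeg : ∀ y ∈ D, G.degree y = 1 := by
        intro y hy
        obtain ⟨x, -, hnb⟩ := hpend y hy
        rw [← SimpleGraph.card_neighborFinset_eq_degree, hnb, Finset.card_singleton]
      have hD1 : ∀ y ∈ D, (N.filter (G.Adj y)).card = 1 := by
        intro y hy
        obtain ⟨x, hvx, hnb⟩ := hpend y hy
        have hfx : N.filter (G.Adj y) = {x} := by
          ext w
          constructor
          · intro hw
            obtain ⟨hwN, hyw⟩ := Finset.mem_filter.mp hw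
            have hmem : w ∈ G.neighborFinset y := (SimpleGraph.mem_neighborFinset _ _ _).mpr hyw
            rw [hnb] at hmem
            exact hmem
          · intro hw
            rw [Finset.mem_singleton] at hw
            subst hw
            have hmem : w ∈ G.neighborFinset y := by rw [hnb]; exact Finset.mem_singleton_self w
            exact Finset.mem_filter.mpr ⟨hmemN.mpr hvx, by simpa using hmem⟩
        rw [hfx, Finset.card_singleton]
      have hdc : ∑ x ∈ N, (D.filter (G.Adj x)).card = D.card := by
        rw [double_count G N D]
        rw [Finset.sum_congr rfl hD1, Finset.sum_const, smul_eq_mul, mul_one]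
      have hNN : ∀ x ∈ N, (N.filter (G.Adj x)).card ≤ 1 := by
        intro x hx
        apply Finset.card_le_one.mpr
        intro p hp q hq
        by_contra hpq
        obtain ⟨hpN, hxp⟩ := Finset.mem_filter.mp hp
        obtain ⟨hqN, hxq⟩ := Finset.mem_filter.mp hq
        have hvp : G.Adj v p := hmemN.mp hpN
        have hvq : G.Adj v q := hmemN.mp hqN
        have hvx : G.Adj v x := hmemN.mp hx
        refine no_path3 hf hvp hxp.symm hxq (G.ne_of_adj hvx).symm (G.ne_of_adj hvq).symm
          (fun h => hpq h.symm) ?_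
        show 2 ≤ (N \ {p, x, q}).card
        have h1 : ({p, x, q} : Finset (Fin n)).card ≤ 3 := by
          refine le_trans (Finset.card_insert_le _ _) ?_
          have := Finset.card_insert_le x ({q} : Finset (Fin n))
          simp at this ⊢; omega
        have h2 := Finset.le_card_sdiff ({p, x, q} : Finset (Fin n)) N
        omega
      have hNdeg : ∀ x ∈ N, G.degree x ≤ 2 + (D.filter (G.Adj x)).card := by
        intro x hx
        rw [hdeg_dec x]
        have h1 : ((insert v N).filter (G.Adj x)).card ≤ 1 + (N.filter (G.Adj x)).card := by
          rw [Finset.filter_insert]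
          split
          · exact le_trans (Finset.card_insert_le _ _) (by omega)
          · omega
        have h2 := hNN x hx
        omega
      have hsum1 : ∑ x ∈ N, G.degree x ≤ 2 * N.card + D.card := by
        calc ∑ x ∈ N, G.degree x ≤ ∑ x ∈ N, (2 + (D.filter (G.Adj x)).card) :=
              Finset.sum_le_sum hNdeg
          _ = 2 * N.card + ∑ x ∈ N, (D.filter (G.Adj x)).card := by
              rw [Finset.sum_add_distrib, Finset.sum_const, smul_eq_mul, mul_comm]
          _ = 2 * N.card + D.card := by rw [hdc]
      have hsum2 : ∑ y ∈ D, G.degree y = D.card := by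
        rw [Finset.sum_congr rfl hDdeg, Finset.sum_const, smul_eq_mul, mul_one]
      have : 2 * G.edgeFinset.card ≤ 3 * (n - 1) := by
        rw [← handshake, hsplit]
        omega
      split_ifs at hbad <;> omega

def windmill (n : ℕ) : SimpleGraph (Fin n) where
  Adj i j := i ≠ j ∧ (i.val = 0 ∨ j.val = 0 ∨ (i.val % 2 = 1 ∧ j.val = i.val + 1) ∨
    (j.val % 2 = 1 ∧ i.val = j.val + 1))
  symm := by
    refine ⟨?_⟩; rintro i j ⟨h1, h2⟩
    exact ⟨h1.symm, by tauto⟩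
  loopless := ⟨fun i h => h.1 rfl⟩

instance (n : ℕ) : DecidableRel (windmill n).Adj := fun i j =>
  inferInstanceAs (Decidable (_ ∧ _))

lemma windmill_connected (n : ℕ) (hn : 1 ≤ n) : (windmill n).Connected := by
  rw [connected_iff]
  refine ⟨?_, ⟨⟨0, by omega⟩⟩⟩
  have key : ∀ x : Fin n, (windmill n).Reachable ⟨0, by omega⟩ x := by
    intro x
    by_cases hx : x = ⟨0, by omega⟩
    · subst hx; rfl
    · exact SimpleGraph.Adj.reachable ⟨fun h => hx h.symm, Or.inl rfl⟩
  intro u w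
  exact (key u).symm.trans (key w)

lemma windmill_adj_val {n : ℕ} {u x : Fin n} (h : (windmill n).Adj u x) (hu : u.val ≠ 0) :
    x.val = 0 ∨ x.val = (if u.val % 2 = 1 then u.val + 1 else u.val - 1) := by
  obtain ⟨hne, hor⟩ := h
  rcases hor with h0 | h0 | ⟨ho, he⟩ | ⟨ho, he⟩
  · exact absurd h0 hu
  · exact Or.inl h0
  · right; rw [if_pos ho]; exact he
  · right
    have : u.val % 2 = 0 := by omega
    rw [if_neg (by omega)]
    omega

lemma windmill_free (n : ℕ) : ¬ ContainsCopy spider311 (windmill n) := by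
  intro h
  obtain ⟨v, a, b, c, d, e, hva, hab, hbc, hvd, hve,
    hvb, hvc, hac, had, hae, hbd, hbe, hcd, hce, hde⟩ := containsCopy_elim h
  by_cases hv0 : v.val = 0
  · -- three path vertices are nonzero; b has two distinct non-`v` neighbors a, c
    have ha0 : a.val ≠ 0 := fun h0 => (windmill n).ne_of_adj hva (Fin.ext (by omega))
    have hb0 : b.val ≠ 0 := fun h0 => hvb (Fin.ext (by omega))
    have hc0 : c.val ≠ 0 := fun h0 => hvc (Fin.ext (by omega))
    have h1 := windmill_adj_val hab.symm hb0
    have h2 := windmill_adj_val hbc hb0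
    rcases h1 with h1 | h1
    · exact ha0 h1
    rcases h2 with h2 | h2
    · exact hc0 h2
    exact hac (Fin.ext (h1.trans h2.symm))
  · -- v has three distinct neighbors a, d, e, but at most two possible values
    have h1 := windmill_adj_val hva hv0
    have h2 := windmill_adj_val hvd hv0
    have h3 := windmill_adj_val hve hv0
    rcases h1 with h1 | h1 <;> rcases h2 with h2 | h2 <;> rcases h3 with h3 | h3 <;>
      first
        | exact had (Fin.ext (by omega))
        | exact hae (Fin.ext (by omega))
        | exact hde (Fin.ext (by omega))

lemma windmill_degree_zero (n : ℕ) (hn : 1 ≤ n) :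
    (windmill n).degree ⟨0, by omega⟩ = n - 1 := by
  rw [← SimpleGraph.card_neighborFinset_eq_degree]
  have : (windmill n).neighborFinset ⟨0, by omega⟩ = Finset.univ.erase ⟨0, by omega⟩ := by
    ext x
    simp only [SimpleGraph.mem_neighborFinset, Finset.mem_erase, Finset.mem_univ, and_true]
    constructor
    · intro h; exact h.1.symm
    · intro h; exact ⟨fun hh => h hh.symm, Or.inl rfl⟩
  rw [this, Finset.card_erase_of_mem (Finset.mem_univ _)]
  simp

lemma windmill_degree_pos (n : ℕ) (u : Fin n) (hu : u.val ≠ 0) :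
    (windmill n).degree u = if u.val % 2 = 1 ∧ u.val = n - 1 then 1 else 2 := by
  have hun : u.val < n := u.isLt
  rw [← SimpleGraph.card_neighborFinset_eq_degree]
  split_ifs with hsp
  · -- only neighbor is 0
    have : (windmill n).neighborFinset u = {⟨0, by omega⟩} := by
      ext x
      simp only [SimpleGraph.mem_neighborFinset, Finset.mem_singleton]
      constructor
      · intro h
        rcases windmill_adj_val h hu with h0 | h0
        · exact Fin.ext h0
        · rw [if_pos hsp.1] at h0
          have := x.isLt
          omega
      · rintro rfl
        exact ⟨fun hh => hu (by rw [hh]), Or.inr (Or.inl rfl)⟩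
    rw [this, Finset.card_singleton]
  · -- neighbors are 0 and the partner
    have hpartner : (if u.val % 2 = 1 then u.val + 1 else u.val - 1) < n := by
      split_ifs with h <;> omega
    set p : Fin n := ⟨if u.val % 2 = 1 then u.val + 1 else u.val - 1, hpartner⟩ with hp
    have hadj : (windmill n).Adj u p := by
      refine ⟨?_, ?_⟩
      · intro hh
        have : u.val = p.val := by rw [hh]
        simp only [hp] at this
        split_ifs at this <;> omega
      · simp only [hp]
        split_ifs with h
        · exact Or.inr (Or.inr (Or.inl ⟨h, rfl⟩))
        · have h2 : p.val = u.val - 1 := by simp only [hp]; rw [if_neg h]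
          refine Or.inr (Or.inr (Or.inr ⟨?_, ?_⟩)) <;> omega
    have : (windmill n).neighborFinset u = {⟨0, by omega⟩, p} := by
      ext x
      simp only [SimpleGraph.mem_neighborFinset, Finset.mem_insert, Finset.mem_singleton]
      constructor
      · intro h
        rcases windmill_adj_val h hu with h0 | h0
        · exact Or.inl (Fin.ext h0)
        · right
          apply Fin.ext
          rw [h0]
      · rintro (rfl | rfl)
        · exact ⟨fun hh => hu (by rw [hh]), Or.inr (Or.inl rfl)⟩
        · exact hadj
    rw [this]
    rw [Finset.card_insert_of_notMem, Finset.card_singleton]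
    intro hmem
    rw [Finset.mem_singleton] at hmem
    have : (0 : ℕ) = p.val := by rw [← hmem]
    simp only [hp] at this
    split_ifs at this <;> omega
lemma windmill_edges (n : ℕ) (hn : 1 ≤ n) :
    (windmill n).edgeFinset.card = (n - 1) + (n - 1) / 2 := by
  have hhs : ∑ u, (windmill n).degree u = 2 * (windmill n).edgeFinset.card :=
    (windmill n).sum_degrees_eq_twice_card_edges
  have hz : (⟨0, by omega⟩ : Fin n) ∈ (Finset.univ : Finset (Fin n)) := Finset.mem_univ _
  rw [← Finset.add_sum_erase _ _ hz] at hhs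
  set A : Finset (Fin n) := Finset.univ.erase ⟨0, by omega⟩ with hA
  have hAmem : ∀ {u : Fin n}, u ∈ A ↔ u.val ≠ 0 := by
    intro u
    simp only [hA, Finset.mem_erase, Finset.mem_univ, and_true]
    constructor
    · intro h h0; exact h (Fin.ext h0)
    · intro h h0; exact h (by rw [h0])
  have hAcard : A.card = n - 1 := by
    rw [hA, Finset.card_erase_of_mem (Finset.mem_univ _)]; simp
  -- split A by the special vertex
  set P : Fin n → Prop := fun u => u.val % 2 = 1 ∧ u.val = n - 1 with hP
  have hPdec : DecidablePred P := fun u => inferInstanceAs (Decidable (_ ∧ _))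
  have hsplitA : ∑ u ∈ A, (windmill n).degree u
      = ∑ u ∈ A.filter P, (windmill n).degree u
      + ∑ u ∈ A.filter (fun u => ¬ P u), (windmill n).degree u :=
    (Finset.sum_filter_add_sum_filter_not A P _).symm
  have hd1 : ∑ u ∈ A.filter P, (windmill n).degree u = (A.filter P).card := by
    rw [Finset.sum_congr rfl (fun u hu => ?_), Finset.sum_const, smul_eq_mul, mul_one]
    obtain ⟨huA, huP⟩ := Finset.mem_filter.mp hu
    rw [windmill_degree_pos n u (hAmem.mp huA), if_pos huP]
  have hd2 : ∑ u ∈ A.filter (fun u => ¬ P u), (windmill n).degree u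
      = 2 * (A.filter (fun u => ¬ P u)).card := by
    rw [Finset.sum_congr rfl (fun u hu => ?_), Finset.sum_const, smul_eq_mul, mul_comm]
    obtain ⟨huA, huP⟩ := Finset.mem_filter.mp hu
    rw [windmill_degree_pos n u (hAmem.mp huA), if_neg huP]
  have hfc : (A.filter P).card = (n - 1) % 2 := by
    rcases Nat.mod_two_eq_zero_or_one (n - 1) with he | ho
    · have : A.filter P = ∅ := by
        rw [Finset.filter_eq_empty_iff]
        intro u hu
        simp only [hP]
        intro ⟨h1, h2⟩
        rw [h2] at h1
        omega
      rw [this]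
      simp only [Finset.card_empty]
      omega
    · have hn2 : n - 1 < n := by omega
      have : A.filter P = {⟨n - 1, hn2⟩} := by
        ext u
        simp only [Finset.mem_filter, Finset.mem_singleton, hP]
        constructor
        · intro ⟨h1, h2, h3⟩
          exact Fin.ext h3
        · rintro rfl
          refine ⟨hAmem.mpr ?_, ?_, rfl⟩ <;> simp <;> omega
      rw [this, Finset.card_singleton]
      omega
  have hcards : (A.filter P).card + (A.filter (fun u => ¬ P u)).card = n - 1 := by
    rw [Finset.card_filter_add_card_filter_not, hAcard]
  rw [windmill_degree_zero n hn, hsplitA, hd1, hd2] at hhs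
  omega
def K33 : SimpleGraph (Fin 6) where
  Adj i j := i.val % 2 ≠ j.val % 2
  symm := ⟨fun _ _ h => h.symm⟩
  loopless := ⟨fun i h => h rfl⟩

instance : DecidableRel K33.Adj := fun i j => inferInstanceAs (Decidable ¬(_ = _))

lemma K33_connected : K33.Connected := by
  rw [connected_iff]
  refine ⟨?_, ⟨0⟩⟩
  have key : ∀ x : Fin 6, K33.Reachable x 0 := by
    intro x
    rcases Nat.mod_two_eq_zero_or_one x.val with h | h
    · by_cases hx : x = 0
      · subst hx; rfl
      · have h1 : K33.Adj x 1 := by simp [K33, h]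
        have h2 : K33.Adj 1 0 := by simp [K33]
        exact h1.reachable.trans h2.reachable
    · exact SimpleGraph.Adj.reachable (by simp [K33, h])
  intro u w
  exact (key u).trans (key w).symm

lemma K33_edges : K33.edgeFinset.card = 9 := by decide

lemma four_parity : ∀ a d e c : Fin 6, a.val % 2 = d.val % 2 → a.val % 2 = e.val % 2 →
    a.val % 2 = c.val % 2 →
    a = d ∨ a = e ∨ a = c ∨ d = e ∨ d = c ∨ e = c := by decide

lemma K33_free : ¬ ContainsCopy spider311 K33 := by
  intro h
  obtain ⟨v, a, b, c, d, e, hva, hab, hbc, hvd, hve,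
    hvb, hvc, hac, had, hae, hbd, hbe, hcd, hce, hde⟩ := containsCopy_elim h
  have p1 : v.val % 2 ≠ a.val % 2 := hva
  have p2 : a.val % 2 ≠ b.val % 2 := hab
  have p3 : b.val % 2 ≠ c.val % 2 := hbc
  have p4 : v.val % 2 ≠ d.val % 2 := hvd
  have p5 : v.val % 2 ≠ e.val % 2 := hve
  have q1 : a.val % 2 = d.val % 2 := by omega
  have q2 : a.val % 2 = e.val % 2 := by omega
  have q3 : a.val % 2 = c.val % 2 := by omega
  rcases four_parity a d e c q1 q2 q3 with h | h | h | h | h | h <;> tauto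
lemma ncard_edge {n : ℕ} (G : SimpleGraph (Fin n)) [DecidableRel G.Adj] :
    G.edgeSet.ncard = G.edgeFinset.card := by
  rw [← SimpleGraph.coe_edgeFinset, Set.ncard_coe_finset]

lemma exConn_eq {n V : ℕ} (G0 : SimpleGraph (Fin n)) (hc : G0.Connected)
    (hfree : ¬ ContainsCopy spider311 G0) (hcard : G0.edgeSet.ncard = V)
    (hub : ∀ G : SimpleGraph (Fin n), G.Connected → ¬ ContainsCopy spider311 G →
      G.edgeSet.ncard ≤ V) :
    exConn n spider311 = V := by
  apply IsGreatest.csSup_eq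
  constructor
  · exact ⟨G0, hc, hfree, hcard.symm⟩
  · rintro m ⟨G, h1, h2, rfl⟩
    exact hub G h1 h2

/-- Theorem: `ex_c(n, S_{3,1,1}) = ⌊3(n-1)/2⌋` for every `n ≥ 7`, and
`ex_c(6, S_{3,1,1}) = 9`. -/
theorem exConn_spider311 :
    (∀ n : ℕ, 7 ≤ n → exConn n spider311 = 3 * (n - 1) / 2) ∧ exConn 6 spider311 = 9 := by
  constructor
  · intro n hn
    have h6 : ¬ (n = 6) := by omega
    apply exConn_eq (windmill n) (windmill_connected n (by omega)) (windmill_free n)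
    · rw [ncard_edge, windmill_edges n (by omega)]
      omega
    · intro G hGc hGf
      letI : DecidableRel G.Adj := fun a b => Classical.dec _
      have h := free_upper (by omega) G hGc hGf
      rw [if_neg h6] at h
      rw [ncard_edge]
      omega
  · apply exConn_eq K33 K33_connected K33_free
    · rw [ncard_edge, K33_edges]
    · intro G hGc hGf
      letI : DecidableRel G.Adj := fun a b => Classical.dec _
      have h := free_upper (by omega) G hGc hGf
      rw [if_pos rfl] at h
      rw [ncard_edge]
      omega
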